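/- arXiv:1503.07192 — 2 statements merged into one kernel-verified Lean document; each statement's English description precedes it below -/
import Mathlib

section
/- Let v1 be a vertex with P v1 ≠ j, v2 a vertex with P v2 = j, and let π be a walk in G from v1 to v2. If b2 is the last vertex along π that belongs to B(C_j), then every vertex of π following b2 (and b2 itself) satisfies P = j; that is, the suffix of π from b2 to v2 lies entirely in the component C_j. Consequently the length of that suffix is at least dist_{C_j}(b2,v2). -/
open scoped ENNReal

namespace SPQ

variable {V : Type*} {ι : Type*}

/-- The length of a walk: the sum of the weights `w` over its consecutive edges. -/
noncomputable def wlen (w : V → V → ℝ≥0∞) {G : SimpleGraph V} {u v : V} (p : G.Walk u v) : ℝ≥0∞ :=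
  (p.darts.map fun d => w d.toProd.1 d.toProd.2).sum

/-- The shortest-path distance: infimum of lengths of all walks (⊤ if none exists). -/
noncomputable def gdist (G : SimpleGraph V) (w : V → V → ℝ≥0∞) (u v : V) : ℝ≥0∞ :=
  ⨅ p : G.Walk u v, wlen w p

/-- The component `C_i`: the subgraph of `G` induced on `P ⁻¹ {i}`
(as a graph on `V`: edges of `G` with both endpoints mapped to `i` by `P`). -/
def comp (G : SimpleGraph V) (P : V → ι) (i : ι) : SimpleGraph V where
  Adj u v := G.Adj u v ∧ P u = i ∧ P v = i
  symm := ⟨fun _ _ h => ⟨h.1.symm, h.2.2, h.2.1⟩⟩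
  loopless := ⟨fun u h => G.irrefl h.1⟩

/-- The boundary `B(C_i)`: vertices of component `i` having a `G`-neighbor
in a different component. -/
def bdry (G : SimpleGraph V) (P : V → ι) (i : ι) : Set V :=
  {v | P v = i ∧ ∃ u, G.Adj v u ∧ P u ≠ i}

/-- The set `B` of all boundary vertices. -/
def bdryAll (G : SimpleGraph V) (P : V → ι) : Set V :=
  ⋃ i, bdry G P i

/-- The boundary graph `BG`: distinct boundary vertices `b1, b2` are adjacent
iff `P b1 = P b2` or `G.Adj b1 b2`. -/
def BGraph (G : SimpleGraph V) (P : V → ι) : SimpleGraph V where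
  Adj b1 b2 := b1 ≠ b2 ∧ b1 ∈ bdryAll G P ∧ b2 ∈ bdryAll G P ∧ (P b1 = P b2 ∨ G.Adj b1 b2)
  symm := by
    constructor
    intro u v h
    refine ⟨h.1.symm, h.2.2.1, h.2.1, ?_⟩
    rcases h.2.2.2 with h' | h'
    · exact Or.inl h'.symm
    · exact Or.inr h'.symm
  loopless := ⟨fun u h => h.1 rfl⟩

open Classical in
/-- The edge weight of the boundary graph:
`wt b1 b2 = dist_{C_{P b1}}(b1, b2)` if `P b1 = P b2`, and `w b1 b2` otherwise. -/
noncomputable def wt (G : SimpleGraph V) (P : V → ι) (w : V → V → ℝ≥0∞) (b1 b2 : V) : ℝ≥0∞ :=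
  if P b1 = P b2 then gdist (comp G P (P b1)) w b1 b2 else w b1 b2

lemma wlen_transfer (w : V → V → ℝ≥0∞) {G H : SimpleGraph V} {u v : V}
    (p : G.Walk u v) (h : ∀ e ∈ p.edges, e ∈ H.edgeSet) :
    wlen w (p.transfer H h) = wlen w p := by
  induction p with
  | nil => rfl
  | cons h' p ih =>
    simp only [wlen, SimpleGraph.Walk.transfer, SimpleGraph.Walk.darts_cons, List.map_cons,
      List.sum_cons] at ih ⊢
    exact congrArg _ (ih _)

/-- If a walk goes from outside the component to inside, it crosses the boundary
at some vertex strictly after its start. -/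
lemma exists_bdry_tail (G : SimpleGraph V) (P : V → ι) (j : ι) :
    ∀ {u v : V} (τ : G.Walk u v), P u ≠ j → P v = j →
      ∃ x ∈ τ.support.tail, x ∈ bdry G P j := by
  intro u v τ
  induction τ with
  | nil => intro hu hv; exact absurd hv hu
  | @cons u u' v h τ' ih =>
    intro hu hv
    by_cases hu' : P u' = j
    · refine ⟨u', ?_, hu', u, h.symm, hu⟩
      rw [SimpleGraph.Walk.support_cons, List.tail_cons, SimpleGraph.Walk.support_eq_cons τ']
      exact List.mem_cons_self
    · obtain ⟨x, hx, hxb⟩ := ih hu' hv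
      refine ⟨x, ?_, hxb⟩
      rw [SimpleGraph.Walk.support_cons, List.tail_cons]
      exact List.mem_of_mem_tail hx

/-- If no vertex strictly after the start of a walk ending inside the component
is a boundary vertex, then every vertex strictly after the start is in the component. -/
lemma tail_in_comp (G : SimpleGraph V) (P : V → ι) (j : ι) :
    ∀ {u v : V} (τ : G.Walk u v), P v = j →
      (∀ x ∈ τ.support.tail, x ∉ bdry G P j) →
      ∀ x ∈ τ.support.tail, P x = j := by
  intro u v τ
  induction τ with
  | nil => intro _ _ x hx; simp at hx
  | @cons u u' v h τ' ih =>
    intro hv hnb x hx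
    rw [SimpleGraph.Walk.support_cons, List.tail_cons] at hx hnb
    have hu' : P u' = j := by
      by_contra hu'
      obtain ⟨y, hy, hyb⟩ := exists_bdry_tail G P j τ' hu' hv
      exact hnb y (List.mem_of_mem_tail hy) hyb
    rw [SimpleGraph.Walk.support_eq_cons τ'] at hx
    rcases List.mem_cons.mp hx with hx | hx
    · exact hx ▸ hu'
    · exact ih hv (fun z hz => hnb z (by
        rw [SimpleGraph.Walk.support_eq_cons τ']; exact List.mem_cons_of_mem _ hz)) x hx

/-- Let `v1` have `P v1 ≠ j`, `v2` have `P v2 = j`, and let `π` be a walk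
in `G` from `v1` to `v2`. If `b2` is the last vertex along `π` that belongs to
`B(C_j)`, then every vertex of `π` following `b2` (and `b2` itself) satisfies `P = j`;
that is, the suffix of `π` from `b2` to `v2` lies entirely in the component `C_j`.
Consequently the length of that suffix is at least `dist_{C_j}(b2, v2)`.
(The suffix of `π` from the last occurrence of `b2` to `v2` is formalized as
`(π.reverse.takeUntil b2 hb2).reverse`.) -/
theorem stmt7 {V : Type*} {ι : Type*} [Fintype V] [Fintype ι] [DecidableEq V]
    (G : SimpleGraph V) (w : V → V → ℝ≥0∞)
    (hsymm : ∀ u v, w u v = w v u) (hfin : ∀ u v, G.Adj u v → w u v < ⊤)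
    (P : V → ι) (j : ι) (v1 v2 b2 : V) (h1 : P v1 ≠ j) (h2 : P v2 = j)
    (π : G.Walk v1 v2) (hb2 : b2 ∈ π.reverse.support) (hb2B : b2 ∈ bdry G P j)
    (hlast : ∀ x ∈ ((π.reverse.takeUntil b2 hb2).reverse).support,
      x ∈ bdry G P j → x = b2) :
    (∀ x ∈ ((π.reverse.takeUntil b2 hb2).reverse).support, P x = j) ∧
    gdist (comp G P j) w b2 v2 ≤ wlen w ((π.reverse.takeUntil b2 hb2).reverse) := by
  set σ := π.reverse.takeUntil b2 hb2 with hσ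
  set τ := σ.reverse with hτ
  have hcount : σ.support.count b2 = 1 :=
    SimpleGraph.Walk.count_support_takeUntil_eq_one π.reverse hb2
  have hcountτ : τ.support.count b2 = 1 := by
    rw [hτ, SimpleGraph.Walk.support_reverse, List.count_reverse]; exact hcount
  have hcons : τ.support = b2 :: τ.support.tail := SimpleGraph.Walk.support_eq_cons τ
  have hnb : ∀ x ∈ τ.support.tail, x ∉ bdry G P j := by
    intro x hx hxb
    have hxs : x ∈ τ.support := by rw [hcons]; exact List.mem_cons_of_mem _ hx
    have hxb2 : x = b2 := hlast x hxs hxb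
    subst hxb2
    have h2le : 2 ≤ τ.support.count x := by
      rw [hcons, List.count_cons_self]
      have := List.count_pos_iff.mpr hx
      omega
    omega
  have hall : ∀ x ∈ τ.support, P x = j := by
    intro x hx
    rw [hcons] at hx
    rcases List.mem_cons.mp hx with hx | hx
    · exact hx ▸ hb2B.1
    · exact tail_in_comp G P j τ h2 hnb x hx
  refine ⟨hall, ?_⟩
  have hedges : ∀ e ∈ τ.edges, e ∈ (comp G P j).edgeSet := by
    intro e he
    induction e with
    | h a b =>
      have hadj : G.Adj a b := τ.edges_subset_edgeSet he
      have ha : a ∈ τ.support := SimpleGraph.Walk.fst_mem_support_of_mem_edges τ he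
      have hb : b ∈ τ.support := SimpleGraph.Walk.snd_mem_support_of_mem_edges τ he
      exact ((comp G P j).mem_edgeSet).mpr ⟨hadj, hall a ha, hall b hb⟩
  calc gdist (comp G P j) w b2 v2 ≤ wlen w (τ.transfer (comp G P j) hedges) :=
        iInf_le _ _
    _ = wlen w τ := wlen_transfer w τ hedges

end SPQ
end

section
/- Let v1 be a vertex with P v1 = i and b2 a boundary vertex with P b2 ≠ i. Then dist_G(v1,b2) equals the infimum over b1 ∈ B(C_i) of dist_{C_i}(v1,b1) + dist_BG(b1,b2). -/
open scoped ENNReal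

namespace SPQ

variable {V : Type*} {ι : Type*}

section helpers

variable {G H : SimpleGraph V} {w : V → V → ℝ≥0∞} {u v x : V}

lemma wlen_nil : wlen w (SimpleGraph.Walk.nil : G.Walk u u) = 0 := rfl

lemma wlen_cons (h : G.Adj u v) (p : G.Walk v x) :
    wlen w (SimpleGraph.Walk.cons h p) = w u v + wlen w p := by
  simp [wlen]

lemma gdist_le_wlen (p : G.Walk u v) : gdist G w u v ≤ wlen w p := iInf_le _ p

lemma gdist_self (u : V) : gdist G w u u = 0 :=
  le_antisymm (gdist_le_wlen SimpleGraph.Walk.nil) zero_le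

lemma gdist_le_add_adj (h : G.Adj u x) (v : V) :
    gdist G w u v ≤ w u x + gdist G w x v := by
  rw [show gdist G w x v = ⨅ q : G.Walk x v, wlen w q from rfl, ENNReal.add_iInf]
  exact le_iInf fun q =>
    (gdist_le_wlen (SimpleGraph.Walk.cons h q)).trans_eq (wlen_cons h q)

lemma gdist_le_adj (h : G.Adj u v) : gdist G w u v ≤ w u v := by
  simpa [wlen_cons, wlen_nil] using
    gdist_le_wlen (SimpleGraph.Walk.cons h SimpleGraph.Walk.nil)

lemma gdist_triangle (u x v : V) :
    gdist G w u v ≤ gdist G w u x + gdist G w x v := by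
  have heq : gdist G w u x + gdist G w x v
      = ⨅ p : G.Walk u x, ⨅ q : G.Walk x v, (wlen w p + wlen w q) := by
    rw [gdist, gdist, ENNReal.iInf_add]
    exact iInf_congr fun p => ENNReal.add_iInf
  rw [heq]
  refine le_iInf fun p => le_iInf fun q => ?_
  refine (gdist_le_wlen (p.append q)).trans_eq ?_
  simp [wlen, SimpleGraph.Walk.darts_append]

lemma gdist_mono {w' : V → V → ℝ≥0∞}
    (hadj : ∀ a b, H.Adj a b → gdist G w a b ≤ w' a b) (u v : V) :
    gdist G w u v ≤ gdist H w' u v := by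
  refine le_iInf fun p => ?_
  induction p with
  | nil => simpa [wlen_nil] using (gdist_self (G := G) (w := w) _).le
  | cons h q ih =>
    rw [wlen_cons]
    exact (gdist_triangle _ _ _).trans (add_le_add (hadj _ _ h) ih)

lemma gdist_le_of_le (hle : ∀ a b, H.Adj a b → G.Adj a b) (u v : V) :
    gdist G w u v ≤ gdist H w u v :=
  gdist_mono (fun a b h => gdist_le_adj (hle a b h)) u v

lemma key (G : SimpleGraph V) (P : V → ι) (w : V → V → ℝ≥0∞) {a b : V}
    (q : G.Walk a b) (hb : b ∈ bdryAll G P) :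
    (⨅ x ∈ bdry G P (P a), gdist (comp G P (P a)) w a x
        + gdist (BGraph G P) (wt G P w) x b) ≤ wlen w q := by
  induction q with
  | nil =>
    obtain ⟨j, hpj, hex⟩ := Set.mem_iUnion.mp hb
    subst hpj
    refine le_trans (iInf₂_le _ ⟨rfl, hex⟩) ?_
    simp [gdist_self, wlen_nil]
  | @cons a c b h q' ih =>
    rw [wlen_cons]
    by_cases hpc : P c = P a
    · have ih' := ih hb
      rw [hpc] at ih'
      refine le_trans ?_ (add_le_add (le_refl (w a c)) ih')
      rw [ENNReal.add_iInf]
      simp only [ENNReal.add_iInf]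
      refine iInf₂_mono fun x hx => ?_
      rw [← add_assoc]
      exact add_le_add_left (gdist_le_add_adj (G := comp G P (P a)) ⟨h, rfl, hpc⟩ x) _
    · have ha : a ∈ bdry G P (P a) := ⟨rfl, c, h, hpc⟩
      have hc : c ∈ bdry G P (P c) := ⟨rfl, a, h.symm, fun e => hpc e.symm⟩
      have haA : a ∈ bdryAll G P := Set.mem_iUnion.mpr ⟨P a, ha⟩
      have hcA : c ∈ bdryAll G P := Set.mem_iUnion.mpr ⟨P c, hc⟩
      refine le_trans (iInf₂_le a ha) ?_
      rw [gdist_self, zero_add]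
      refine le_trans ?_ (add_le_add (le_refl (w a c)) (ih hb))
      rw [ENNReal.add_iInf]
      simp only [ENNReal.add_iInf]
      refine le_iInf₂ fun x hx => ?_
      have hxA : x ∈ bdryAll G P := Set.mem_iUnion.mpr ⟨P c, hx⟩
      have hax : gdist (BGraph G P) (wt G P w) a x
          ≤ w a c + gdist (comp G P (P c)) w c x := by
        by_cases hcx : c = x
        · subst hcx
          have h1 : gdist (BGraph G P) (wt G P w) a c ≤ wt G P w a c :=
            gdist_le_adj (G := BGraph G P) ⟨h.ne, haA, hcA, Or.inr h⟩
          rw [wt, if_neg (fun e => hpc e.symm)] at h1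
          exact h1.trans le_self_add
        · have h1 : gdist (BGraph G P) (wt G P w) a c ≤ wt G P w a c :=
            gdist_le_adj (G := BGraph G P) ⟨h.ne, haA, hcA, Or.inr h⟩
          have h2 : gdist (BGraph G P) (wt G P w) c x ≤ wt G P w c x :=
            gdist_le_adj (G := BGraph G P) ⟨hcx, hcA, hxA, Or.inl hx.1.symm⟩
          rw [wt, if_neg (fun e => hpc e.symm)] at h1
          rw [wt, if_pos hx.1.symm] at h2
          exact (gdist_triangle a c x).trans (add_le_add h1 h2)
      calc gdist (BGraph G P) (wt G P w) a b
          ≤ gdist (BGraph G P) (wt G P w) a x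
            + gdist (BGraph G P) (wt G P w) x b := gdist_triangle a x b
        _ ≤ (w a c + gdist (comp G P (P c)) w c x)
            + gdist (BGraph G P) (wt G P w) x b := add_le_add_left hax _
        _ = w a c + (gdist (comp G P (P c)) w c x
            + gdist (BGraph G P) (wt G P w) x b) := add_assoc _ _ _

end helpers

/-- Let `v1` be a vertex with `P v1 = i` and `b2` a boundary vertex with
`P b2 ≠ i`. Then `dist_G(v1,b2)` equals the infimum over `b1 ∈ B(C_i)` of
`dist_{C_i}(v1,b1) + dist_BG(b1,b2)`. -/
theorem stmt8 {V : Type*} {ι : Type*} [Fintype V] [Fintype ι]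
    (G : SimpleGraph V) (w : V → V → ℝ≥0∞)
    (hsymm : ∀ u v, w u v = w v u) (hfin : ∀ u v, G.Adj u v → w u v < ⊤)
    (P : V → ι) (i : ι) (v1 b2 : V) (h1 : P v1 = i)
    (hb2 : b2 ∈ bdryAll G P) (hne : P b2 ≠ i) :
    gdist G w v1 b2 =
      ⨅ b1 ∈ bdry G P i,
        (gdist (comp G P i) w v1 b1 + gdist (BGraph G P) (wt G P w) b1 b2) := by
  subst h1
  refine le_antisymm ?_ ?_
  · refine le_iInf₂ fun b1 hb1 => ?_
    refine (gdist_triangle v1 b1 b2).trans (add_le_add ?_ ?_)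
    · exact gdist_le_of_le (H := comp G P (P v1)) (fun a b hab => (show _ ∧ _ from hab).1) v1 b1
    · refine gdist_mono (H := BGraph G P) (fun a b hab => ?_) b1 b2
      rcases (show _ ∧ _ ∧ _ ∧ _ from hab) with ⟨hne', hA, hB, hor⟩
      rw [wt]
      split_ifs with hp
      · exact gdist_le_of_le (H := comp G P (P a)) (fun x y hxy => (show _ ∧ _ from hxy).1) a b
      · rcases hor with h' | h'
        · exact absurd h' hp
        · exact gdist_le_adj h'
  · exact le_iInf fun q => key G P w q hb2

end SPQ
end
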